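/- Let F be the free group on two generators a, b, with the generating set {a, b}, let φ ∈ Aut(F) be the automorphism determined by φ(a) = a and φ(b) = ba, and let Φ ∈ Out(F) be its outer class. Then the function n ↦ d_Lip(1, Φⁿ) grows logarithmically: it is equivalent to n ↦ ln(n+1); in particular there exists C > 0 such that (1/C)·ln(n+1) − C ≤ d_Lip(1, Φⁿ) ≤ C·ln(n+1) + C for all n ∈ ℕ. -/

import Mathlib

open Set Pointwise

variable {G : Type*} [Group G]

/-- The word length of `g` with respect to a generating set `S`:
the least `n` such that `g` is a product of `n` elements of `S ∪ S⁻¹`. -/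
noncomputable def wordLength (S : Set G) (g : G) : ℕ :=
  sInf {n : ℕ | ∃ l : List G, l.length = n ∧ (∀ x ∈ l, x ∈ S ∪ S⁻¹) ∧ l.prod = g}

/-- The word metric associated to a generating set `S`, as a real number. -/
noncomputable def wordDist (S : Set G) (g h : G) : ℝ :=
  (wordLength S (g⁻¹ * h) : ℝ)

/-- The conjugacy norm of (the conjugacy class of) `g`: the minimal word length
of an element conjugate to `g`. -/
noncomputable def conjNorm (S : Set G) (g : G) : ℕ :=
  sInf {n : ℕ | ∃ x : G, n = wordLength S (x * g * x⁻¹)}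

/-- The Lipschitz pseudo-metric, computed on automorphisms (it only depends on the
outer classes): `d_Lip(φ₁, φ₂) = ln sup_c ‖φ₂⁻¹(c)‖ / ‖φ₁⁻¹(c)‖`, the supremum being
over all non-trivial conjugacy classes `c`. -/
noncomputable def dLipAut (S : Set G) (φ₁ φ₂ : MulAut G) : ℝ :=
  Real.log (sSup {r : ℝ | ∃ g : G, g ≠ 1 ∧
    r = (conjNorm S (φ₂⁻¹ g) : ℝ) / (conjNorm S (φ₁⁻¹ g) : ℝ)})

instance : ((MulAut.conj : G →* MulAut G).range).Normal := by
  constructor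
  rintro x ⟨g, rfl⟩ ψ
  refine ⟨ψ g, ?_⟩
  ext y
  simp [MulAut.conj, mul_assoc]

/-- The outer automorphism group `Out(G) = Aut(G)/Inn(G)`. -/
abbrev OutGroup (G : Type*) [Group G] :=
  MulAut G ⧸ (MulAut.conj : G →* MulAut G).range

/-- The Lipschitz pseudo-metric on `Out(G)`; it is computed using any
representatives of the outer classes (the value does not depend on this choice,
whence the infimum). -/
noncomputable def dLipOut (S : Set G) (Φ₁ Φ₂ : OutGroup G) : ℝ :=
  sInf {d : ℝ | ∃ φ₁ φ₂ : MulAut G, (φ₁ : OutGroup G) = Φ₁ ∧ (φ₂ : OutGroup G) = Φ₂ ∧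
    d = dLipAut S φ₁ φ₂}

/-- Gromov hyperbolicity (four-point condition) for the word metric of `(G, S)`. -/
def IsHyperbolic (S : Set G) : Prop :=
  ∃ δ : ℝ, 0 ≤ δ ∧ ∀ x y z w : G,
    wordDist S x z + wordDist S y w ≤
      max (wordDist S x y + wordDist S z w) (wordDist S x w + wordDist S y z) + 2 * δ

/-- A group is virtually cyclic if it has a cyclic subgroup of finite index;
a group is *non-elementary* if it is not virtually cyclic. -/
def IsVirtuallyCyclic (G : Type*) [Group G] : Prop :=
  ∃ H : Subgroup G, H.FiniteIndex ∧ IsCyclic H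

/-- A length function on a group `H`. -/
structure IsLengthFunction {H : Type*} [Group H] (L : H → ℕ) : Prop where
  eq_zero_iff : ∀ h : H, L h = 0 ↔ h = 1
  inv_eq : ∀ h : H, L h⁻¹ = L h
  subadd : ∀ h₁ h₂ : H, L (h₁ * h₂) ≤ L h₁ + L h₂
  growth : ∃ lam : ℝ, 0 < lam ∧ ∀ r : ℕ, ∃ t : Finset H,
    {h : H | L h ≤ r} ⊆ ↑t ∧ (t.card : ℝ) ≤ lam ^ r

/-- A length function on the (additive) group `ℤ`. -/
structure IsLengthFunctionZ (L : ℤ → ℕ) : Prop where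
  eq_zero_iff : ∀ n : ℤ, L n = 0 ↔ n = 0
  neg_eq : ∀ n : ℤ, L (-n) = L n
  subadd : ∀ m n : ℤ, L (m + n) ≤ L m + L n
  growth : ∃ lam : ℝ, 0 < lam ∧ ∀ r : ℕ, ∃ t : Finset ℤ,
    {n : ℤ | L n ≤ r} ⊆ ↑t ∧ (t.card : ℝ) ≤ lam ^ r

/-- `f₁ ≺ f₂` for functions on `ℤ`. -/
def PrecZ (f₁ f₂ : ℤ → ℝ) : Prop := ∃ C : ℝ, 0 < C ∧ ∀ n : ℤ, f₁ n ≤ C * f₂ n + C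

/-- `f₁ ≍ f₂` (equivalence of growth) for functions on `ℤ`. -/
def EquivZ (f₁ f₂ : ℤ → ℝ) : Prop := PrecZ f₁ f₂ ∧ PrecZ f₂ f₁

/-- `f₁ ≺ f₂` for functions on `ℕ`. -/
def PrecN (f₁ f₂ : ℕ → ℝ) : Prop := ∃ C : ℝ, 0 < C ∧ ∀ n : ℕ, f₁ n ≤ C * f₂ n + C

/-- `f₁ ≍ f₂` (equivalence of growth) for functions on `ℕ`. -/
def EquivN (f₁ f₂ : ℕ → ℝ) : Prop := PrecN f₁ f₂ ∧ PrecN f₂ f₁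

/-- A group is finitely presented if it is isomorphic to the quotient of a
finitely generated free group by the normal closure of finitely many relators. -/
def FinitelyPresented (Q : Type*) [Group Q] : Prop :=
  ∃ (n : ℕ) (rels : Finset (FreeGroup (Fin n))),
    Nonempty (PresentedGroup (↑rels : Set (FreeGroup (Fin n))) ≃* Q)

/-- A geodesic from `x` to `y` in a metric space, recorded as its image `s`. -/
def IsGeodesicFrom {X : Type*} [MetricSpace X] (s : Set X) (x y : X) : Prop :=
  ∃ γ : ℝ → X, γ 0 = x ∧ γ (dist x y) = y ∧
    (∀ u ∈ Set.Icc (0:ℝ) (dist x y), ∀ v ∈ Set.Icc (0:ℝ) (dist x y),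
      dist (γ u) (γ v) = |u - v|) ∧
    s = γ '' Set.Icc (0:ℝ) (dist x y)

/-- A geodesic metric space: any two points are joined by a geodesic. -/
def GeodesicSpace (X : Type*) [MetricSpace X] : Prop :=
  ∀ x y : X, ∃ s : Set X, IsGeodesicFrom s x y

/-- All geodesic triangles are `δ`-thin: each side lies in the `δ`-neighborhood of
the union of the other two sides. -/
def ThinTriangles (X : Type*) [MetricSpace X] (δ : ℝ) : Prop :=
  ∀ x y z : X, ∀ s₁ s₂ s₃ : Set X,
    IsGeodesicFrom s₁ x y → IsGeodesicFrom s₂ y z → IsGeodesicFrom s₃ x z →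
    ∀ p ∈ s₃, ∃ q ∈ s₁ ∪ s₂, dist p q ≤ δ

namespace DehnTwistAux

abbrev FF := FreeGroup (Fin 2)
abbrev aa : FF := FreeGroup.of 0
abbrev bb : FF := FreeGroup.of 1
abbrev Sab : Set FF := {FreeGroup.of 0, FreeGroup.of 1}

lemma mem_cases {s : FF} (hs : s ∈ Sab ∪ Sab⁻¹) :
    s = aa ∨ s = bb ∨ s = aa⁻¹ ∨ s = bb⁻¹ := by
  rcases hs with hs | hs
  · rcases hs with h | h
    · exact Or.inl h
    · exact Or.inr (Or.inl h)
  · rw [Set.mem_inv] at hs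
    rcases hs with h | h
    · exact Or.inr (Or.inr (Or.inl (by rw [← inv_inv s, h])))
    · exact Or.inr (Or.inr (Or.inr (by rw [← inv_inv s, h])))

lemma aa_mem : aa ∈ Sab ∪ Sab⁻¹ := Or.inl (Or.inl rfl)
lemma bb_mem : bb ∈ Sab ∪ Sab⁻¹ := Or.inl (Or.inr rfl)
lemma aainv_mem : aa⁻¹ ∈ Sab ∪ Sab⁻¹ := Or.inr (by simp [Set.mem_inv])
lemma bbinv_mem : bb⁻¹ ∈ Sab ∪ Sab⁻¹ := Or.inr (by simp [Set.mem_inv])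

lemma inv_mem_SS {s : FF} (hs : s ∈ Sab ∪ Sab⁻¹) : s⁻¹ ∈ Sab ∪ Sab⁻¹ := by
  rcases hs with h | h
  · exact Or.inr (by rwa [Set.mem_inv, inv_inv])
  · rw [Set.mem_inv] at h
    exact Or.inl h

lemma gen (g : FF) :
    ∃ l : List FF, (∀ x ∈ l, x ∈ Sab ∪ Sab⁻¹) ∧ l.prod = g := by
  induction g using FreeGroup.induction_on with
  | C1 => exact ⟨[], by simp, by simp⟩
  | of i =>
    fin_cases i
    · exact ⟨[aa], by simpa using aa_mem, by simp only [List.prod_singleton]; rfl⟩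
    · exact ⟨[bb], by simpa using bb_mem, by simp only [List.prod_singleton]; rfl⟩
  | inv_of i _ =>
    fin_cases i
    · exact ⟨[aa⁻¹], by simpa using aainv_mem, by simp only [List.prod_singleton]; rfl⟩
    · exact ⟨[bb⁻¹], by simpa using bbinv_mem, by simp only [List.prod_singleton]; rfl⟩
  | mul x y hx hy =>
    obtain ⟨l1, h1, h1'⟩ := hx
    obtain ⟨l2, h2, h2'⟩ := hy
    exact ⟨l1 ++ l2, by
      intro z hz
      rcases List.mem_append.mp hz with h | h
      exacts [h1 z h, h2 z h], by simp [h1', h2']⟩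

lemma ws_nonempty (g : FF) :
    {n : ℕ | ∃ l : List FF, l.length = n ∧ (∀ x ∈ l, x ∈ Sab ∪ Sab⁻¹) ∧ l.prod = g}.Nonempty := by
  obtain ⟨l, h1, h2⟩ := gen g
  exact ⟨l.length, l, rfl, h1, h2⟩

lemma wl_le {g : FF} {n : ℕ} (l : List FF) (h1 : l.length = n)
    (h2 : ∀ x ∈ l, x ∈ Sab ∪ Sab⁻¹) (h3 : l.prod = g) : wordLength Sab g ≤ n :=
  Nat.sInf_le ⟨l, h1, h2, h3⟩

lemma wl_spec (g : FF) : ∃ l : List FF, l.length = wordLength Sab g ∧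
    (∀ x ∈ l, x ∈ Sab ∪ Sab⁻¹) ∧ l.prod = g :=
  Nat.sInf_mem (ws_nonempty g)

lemma wl_mul (g h : FF) :
    wordLength Sab (g * h) ≤ wordLength Sab g + wordLength Sab h := by
  obtain ⟨l1, e1, m1, p1⟩ := wl_spec g
  obtain ⟨l2, e2, m2, p2⟩ := wl_spec h
  refine wl_le (l1 ++ l2) (by simp [e1, e2]) ?_ (by simp [p1, p2])
  intro z hz
  rcases List.mem_append.mp hz with hh | hh
  exacts [m1 z hh, m2 z hh]

lemma wl_inv (g : FF) : wordLength Sab g⁻¹ ≤ wordLength Sab g := by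
  obtain ⟨l, e, m, p⟩ := wl_spec g
  refine wl_le ((l.map (·⁻¹)).reverse) (by simp [e]) ?_ ?_
  · intro z hz
    simp only [List.mem_reverse, List.mem_map] at hz
    obtain ⟨y, hy, rfl⟩ := hz
    exact inv_mem_SS (m y hy)
  · rw [← p, List.prod_inv_reverse]

lemma wl_pow (g : FF) (n : ℕ) :
    wordLength Sab (g ^ n) ≤ n * wordLength Sab g := by
  induction n with
  | zero => simpa using wl_le [] rfl (by simp) rfl
  | succ k ih =>
    calc wordLength Sab (g ^ (k + 1)) = wordLength Sab (g ^ k * g) := by rw [pow_succ]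
    _ ≤ wordLength Sab (g ^ k) + wordLength Sab g := wl_mul _ _
    _ ≤ k * wordLength Sab g + wordLength Sab g := by omega
    _ = (k + 1) * wordLength Sab g := by ring

lemma wl_pos {g : FF} (hg : g ≠ 1) : 1 ≤ wordLength Sab g := by
  by_contra h
  push_neg at h
  interval_cases h' : wordLength Sab g
  obtain ⟨l, e, _, p⟩ := wl_spec g
  rw [h'] at e
  rw [List.length_eq_zero_iff] at e
  exact hg (by rw [← p, e, List.prod_nil])

noncomputable def expA : FF →* Multiplicative ℤ :=
  FreeGroup.lift fun i => Multiplicative.ofAdd (if i = 0 then 1 else 0)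

noncomputable def expB : FF →* Multiplicative ℤ :=
  FreeGroup.lift fun i => Multiplicative.ofAdd (if i = 1 then 1 else 0)

noncomputable def nu (g : FF) : ℕ :=
  (Multiplicative.toAdd (expA g)).natAbs + (Multiplicative.toAdd (expB g)).natAbs

lemma nu_mul (g h : FF) : nu (g * h) ≤ nu g + nu h := by
  simp only [nu, map_mul, toAdd_mul]
  have := Int.natAbs_add_le (Multiplicative.toAdd (expA g)) (Multiplicative.toAdd (expA h))
  have := Int.natAbs_add_le (Multiplicative.toAdd (expB g)) (Multiplicative.toAdd (expB h))
  omega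

lemma nu_conj (x g : FF) : nu (x * g * x⁻¹) = nu g := by
  have h : ∀ (f : FF →* Multiplicative ℤ), f (x * g * x⁻¹) = f g := by
    intro f
    rw [map_mul, map_mul, map_inv, mul_comm (f x) (f g), mul_inv_cancel_right]
  simp only [nu, h]

lemma nu_letter {s : FF} (hs : s ∈ Sab ∪ Sab⁻¹) : nu s ≤ 1 := by
  rcases mem_cases hs with rfl | rfl | rfl | rfl <;>
    simp [nu, expA, expB, FreeGroup.lift_apply_of]

lemma nu_list (l : List FF) (h : ∀ x ∈ l, x ∈ Sab ∪ Sab⁻¹) :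
    nu l.prod ≤ l.length := by
  induction l with
  | nil => simp [nu]
  | cons x t ih =>
    have h1 : nu (x * t.prod) ≤ nu x + nu t.prod := nu_mul _ _
    have h2 : nu x ≤ 1 := nu_letter (h x List.mem_cons_self)
    have h3 : nu t.prod ≤ t.length := ih fun y hy => h y (List.mem_cons_of_mem x hy)
    simpa using h1.trans (by omega)

lemma nu_le_wl (g : FF) : nu g ≤ wordLength Sab g := by
  refine le_csInf (ws_nonempty g) ?_
  rintro n ⟨l, rfl, hl, rfl⟩
  exact nu_list l hl

lemma cs_nonempty (g : FF) :
    {n : ℕ | ∃ x : FF, n = wordLength Sab (x * g * x⁻¹)}.Nonempty :=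
  ⟨wordLength Sab (1 * g * 1⁻¹), 1, rfl⟩

lemma cn_le_wl (g : FF) : conjNorm Sab g ≤ wordLength Sab g :=
  Nat.sInf_le ⟨1, by simp⟩

lemma nu_le_cn (g : FF) : nu g ≤ conjNorm Sab g := by
  refine le_csInf (cs_nonempty g) ?_
  rintro n ⟨x, rfl⟩
  rw [← nu_conj x g]
  exact nu_le_wl _

lemma cn_pos {g : FF} (hg : g ≠ 1) : 1 ≤ conjNorm Sab g := by
  refine le_csInf (cs_nonempty g) ?_
  rintro n ⟨x, rfl⟩
  refine wl_pos ?_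
  intro h
  apply hg
  have := congrArg (fun y => x⁻¹ * y * x) h
  simp only [mul_assoc] at this
  simpa [← mul_assoc] using this

lemma cn_spec (g : FF) : ∃ x : FF, conjNorm Sab g = wordLength Sab (x * g * x⁻¹) :=
  Nat.sInf_mem (cs_nonempty g)

lemma wl_list_prod (K : ℕ) : ∀ l : List FF, (∀ x ∈ l, wordLength Sab x ≤ K) →
    wordLength Sab l.prod ≤ K * l.length := by
  intro l
  induction l with
  | nil => intro _; simpa using wl_le [] rfl (by simp) rfl
  | cons x t ih =>
    intro h
    have h1 := wl_mul x t.prod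
    have h2 := h x List.mem_cons_self
    have h3 := ih fun y hy => h y (List.mem_cons_of_mem x hy)
    simp only [List.prod_cons, List.length_cons]
    calc wordLength Sab (x * t.prod) ≤ wordLength Sab x + wordLength Sab t.prod := h1
    _ ≤ K + K * t.length := by omega
    _ = K * (t.length + 1) := by ring

lemma wl_aut (ψ : MulAut FF) (K : ℕ)
    (hK : ∀ s ∈ Sab ∪ Sab⁻¹, wordLength Sab (ψ s) ≤ K) (g : FF) :
    wordLength Sab (ψ g) ≤ K * wordLength Sab g := by
  obtain ⟨l, e, m, p⟩ := wl_spec g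
  have hg : ψ g = (l.map ψ).prod := by rw [← p, map_list_prod]
  rw [hg, ← e]
  have := wl_list_prod K (l.map ψ) ?_
  · simpa using this
  · intro y hy
    simp only [List.mem_map] at hy
    obtain ⟨z, hz, rfl⟩ := hy
    exact hK z (m z hz)

lemma cn_aut (ψ : MulAut FF) (K : ℕ)
    (hK : ∀ s ∈ Sab ∪ Sab⁻¹, wordLength Sab (ψ s) ≤ K) (g : FF) :
    conjNorm Sab (ψ g) ≤ K * conjNorm Sab g := by
  obtain ⟨x, hx⟩ := cn_spec g
  have h1 : conjNorm Sab (ψ g) ≤ wordLength Sab (ψ x * ψ g * (ψ x)⁻¹) :=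
    Nat.sInf_le ⟨ψ x, rfl⟩
  have h2 : ψ x * ψ g * (ψ x)⁻¹ = ψ (x * g * x⁻¹) := by
    rw [map_mul, map_mul, map_inv]
  rw [h2] at h1
  exact h1.trans (by rw [hx]; exact wl_aut ψ K hK _)


section Phi
variable (φ : MulAut FF)

lemma phi_inv_a (hφa : φ aa = aa) : φ⁻¹ aa = aa := by
  have : φ⁻¹ (φ aa) = aa := φ.symm_apply_apply aa
  rwa [hφa] at this

lemma phi_inv_b (hφa : φ aa = aa) (hφb : φ bb = bb * aa) : φ⁻¹ bb = bb * aa⁻¹ := by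
  have h : φ (bb * aa⁻¹) = bb := by
    rw [map_mul, map_inv, hφa, hφb, mul_inv_cancel_right]
  have : φ⁻¹ (φ (bb * aa⁻¹)) = bb * aa⁻¹ := φ.symm_apply_apply _
  rwa [h] at this

lemma phin_a (hφa : φ aa = aa) (n : ℕ) : ((φ⁻¹) ^ n) aa = aa := by
  induction n with
  | zero => rfl
  | succ k ih =>
    rw [pow_succ']
    show φ⁻¹ (((φ⁻¹) ^ k) aa) = aa
    rw [ih, phi_inv_a φ hφa]

lemma phin_b (hφa : φ aa = aa) (hφb : φ bb = bb * aa) (n : ℕ) :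
    ((φ⁻¹) ^ n) bb = bb * (aa⁻¹) ^ n := by
  induction n with
  | zero => rw [pow_zero, pow_zero, mul_one]; rfl
  | succ k ih =>
    rw [pow_succ']
    show φ⁻¹ (((φ⁻¹) ^ k) bb) = _
    rw [ih, map_mul, map_pow, map_inv, phi_inv_a φ hφa, phi_inv_b φ hφa hφb]
    rw [pow_succ' (aa⁻¹) k, mul_assoc]

lemma wl_letters_pow (hφa : φ aa = aa) (hφb : φ bb = bb * aa) (n : ℕ) :
    ∀ s ∈ Sab ∪ Sab⁻¹, wordLength Sab (((φ ^ n)⁻¹) s) ≤ n + 1 := by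
  intro s hs
  rw [← inv_pow]
  have ha : ((φ⁻¹) ^ n) aa = aa := phin_a φ hφa n
  have hb : ((φ⁻¹) ^ n) bb = bb * (aa⁻¹) ^ n := phin_b φ hφa hφb n
  have wla : wordLength Sab aa ≤ 1 :=
    wl_le [aa] rfl (by simpa using aa_mem) (by simp)
  have wlb : wordLength Sab bb ≤ 1 :=
    wl_le [bb] rfl (by simpa using bb_mem) (by simp)
  have wlainv : wordLength Sab aa⁻¹ ≤ 1 :=
    wl_le [aa⁻¹] rfl (by simpa using aainv_mem) (by simp)
  have hbn : wordLength Sab (bb * (aa⁻¹) ^ n) ≤ n + 1 := by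
    calc wordLength Sab (bb * (aa⁻¹) ^ n)
        ≤ wordLength Sab bb + wordLength Sab ((aa⁻¹) ^ n) := wl_mul _ _
      _ ≤ 1 + n * wordLength Sab aa⁻¹ := by
          have := wl_pow (aa⁻¹) n; omega
      _ ≤ n + 1 := by
          have : n * wordLength Sab aa⁻¹ ≤ n * 1 := Nat.mul_le_mul_left n wlainv
          omega
  rcases mem_cases hs with rfl | rfl | rfl | rfl
  · rw [ha]; omega
  · rw [hb]; exact hbn
  · rw [map_inv, ha]; omega
  · rw [map_inv, hb]
    exact (wl_inv _).trans hbn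

lemma nu_ban (n : ℕ) : nu (bb * (aa⁻¹) ^ n) = n + 1 := by
  have hA : Multiplicative.toAdd (expA (bb * (aa⁻¹) ^ n)) = -(n : ℤ) := by
    simp [expA, map_mul, map_pow, map_inv, FreeGroup.lift_apply_of]
  have hB : Multiplicative.toAdd (expB (bb * (aa⁻¹) ^ n)) = 1 := by
    simp [expB, map_mul, map_pow, map_inv, FreeGroup.lift_apply_of]
  unfold nu
  rw [hA, hB]
  simp

lemma cn_b : conjNorm Sab bb = 1 :=
  le_antisymm ((cn_le_wl bb).trans (wl_le [bb] rfl (by simpa using bb_mem) (by simp)))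
    (cn_pos (FreeGroup.of_ne_one 1))

lemma cn_phin_b (hφa : φ aa = aa) (hφb : φ bb = bb * aa) (n : ℕ) :
    conjNorm Sab (((φ ^ n)⁻¹) bb) = n + 1 := by
  rw [← inv_pow, phin_b φ hφa hφb]
  refine le_antisymm ?_ ?_
  · refine (cn_le_wl _).trans ?_
    calc wordLength Sab (bb * (aa⁻¹) ^ n)
        ≤ wordLength Sab bb + wordLength Sab ((aa⁻¹) ^ n) := wl_mul _ _
      _ ≤ 1 + n * wordLength Sab aa⁻¹ := by
          have h1 : wordLength Sab bb ≤ 1 :=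
            wl_le [bb] rfl (by simpa using bb_mem) (by simp)
          have := wl_pow (aa⁻¹) n; omega
      _ ≤ n + 1 := by
          have h2 : wordLength Sab aa⁻¹ ≤ 1 :=
            wl_le [aa⁻¹] rfl (by simpa using aainv_mem) (by simp)
          have : n * wordLength Sab aa⁻¹ ≤ n * 1 := Nat.mul_le_mul_left n h2
          omega
  · rw [← nu_ban n]
    exact nu_le_cn _

end Phi
end DehnTwistAux

open DehnTwistAux

/-- For the automorphism `φ` of the free group `F(a,b)` with
`φ(a) = a`, `φ(b) = ba` (a Dehn twist on the punctured torus), the map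
`n ↦ d_Lip(1, Φⁿ)` grows logarithmically. Here `a = FreeGroup.of 0`,
`b = FreeGroup.of 1`, and the Lipschitz pseudo-metric is computed on automorphism
representatives (it only depends on the outer classes). -/
theorem dehn_twist_log_growth (φ : MulAut (FreeGroup (Fin 2)))
    (hφa : φ (FreeGroup.of (0 : Fin 2)) = FreeGroup.of (0 : Fin 2))
    (hφb : φ (FreeGroup.of (1 : Fin 2)) =
      FreeGroup.of (1 : Fin 2) * FreeGroup.of (0 : Fin 2)) :
    ∃ C : ℝ, 0 < C ∧ ∀ n : ℕ,
      (1 / C) * Real.log (n + 1) - C ≤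
          dLipAut {FreeGroup.of (0 : Fin 2), FreeGroup.of (1 : Fin 2)} 1 (φ ^ n) ∧
        dLipAut {FreeGroup.of (0 : Fin 2), FreeGroup.of (1 : Fin 2)} 1 (φ ^ n) ≤
          C * Real.log (n + 1) + C := by

  have key : ∀ n : ℕ,
      dLipAut Sab (1 : MulAut FF) (φ ^ n) = Real.log ((n : ℝ) + 1) := by
    intro n
    have hT : dLipAut Sab (1 : MulAut FF) (φ ^ n) =
        Real.log (sSup {r : ℝ | ∃ g : FF, g ≠ 1 ∧
          r = (conjNorm Sab ((φ ^ n)⁻¹ g) : ℝ) /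
            (conjNorm Sab (((1 : MulAut FF))⁻¹ g) : ℝ)}) := rfl
    rw [hT]
    have hone : ∀ g : FF, ((1 : MulAut FF))⁻¹ g = g := by
      intro g; rw [inv_one]; rfl
    have hub : ∀ r ∈ {r : ℝ | ∃ g : FF, g ≠ 1 ∧
        r = (conjNorm Sab ((φ ^ n)⁻¹ g) : ℝ) /
          (conjNorm Sab (((1 : MulAut FF))⁻¹ g) : ℝ)}, r ≤ (n : ℝ) + 1 := by
      rintro r ⟨g, hg, rfl⟩
      rw [hone g]
      have hB : 1 ≤ conjNorm Sab g := cn_pos hg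
      have hBpos : (0 : ℝ) < (conjNorm Sab g : ℝ) := by exact_mod_cast hB
      have hA : conjNorm Sab ((φ ^ n)⁻¹ g) ≤ (n + 1) * conjNorm Sab g :=
        cn_aut ((φ ^ n)⁻¹) (n + 1) (wl_letters_pow φ hφa hφb n) g
      rw [div_le_iff₀ hBpos]
      calc (conjNorm Sab ((φ ^ n)⁻¹ g) : ℝ) ≤ ((n + 1) * conjNorm Sab g : ℕ) := by
            exact_mod_cast hA
        _ = ((n : ℝ) + 1) * (conjNorm Sab g : ℝ) := by push_cast; ring
    have hmem : ((n : ℝ) + 1) ∈ {r : ℝ | ∃ g : FF, g ≠ 1 ∧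
        r = (conjNorm Sab ((φ ^ n)⁻¹ g) : ℝ) /
          (conjNorm Sab (((1 : MulAut FF))⁻¹ g) : ℝ)} := by
      refine ⟨bb, FreeGroup.of_ne_one 1, ?_⟩
      rw [hone bb, cn_phin_b φ hφa hφb n, cn_b]
      push_cast
      rw [div_one]
    have hsup : sSup {r : ℝ | ∃ g : FF, g ≠ 1 ∧
        r = (conjNorm Sab ((φ ^ n)⁻¹ g) : ℝ) /
          (conjNorm Sab (((1 : MulAut FF))⁻¹ g) : ℝ)} = (n : ℝ) + 1 :=
      le_antisymm (csSup_le ⟨_, hmem⟩ hub) (le_csSup ⟨(n : ℝ) + 1, hub⟩ hmem)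
    rw [hsup]
  refine ⟨1, one_pos, fun n => ?_⟩
  rw [show dLipAut {FreeGroup.of (0 : Fin 2), FreeGroup.of (1 : Fin 2)}
      (1 : MulAut (FreeGroup (Fin 2))) (φ ^ n) = Real.log ((n : ℝ) + 1) from key n]
  constructor
  · rw [one_div_one, one_mul]
    exact sub_le_self _ zero_le_one
  · rw [one_mul]
    exact le_add_of_nonneg_right zero_le_one
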